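/- Let u_n ∈ Δ(K × C_n × D_n) be the sequence of structures where the state k ∈ {0,1}, pairs of signals are uniform over a set of 2(n+1) pairs such that player 2's signals 0 and n+1 reveal the state and no other signal reveals anything, and each player's signal is 1/(n+1)-independent from the state. Let u be the structure with no information (trivial signals, uniform state). Then d(u_n, u) ≤ 2/(n+1); in particular d(u_n,u) → 0. -/

import Mathlib

open scoped BigOperators

noncomputable section

/-- A probability distribution on a finite type, given as a nonnegative function summing to 1. -/
def IsDist {α : Type*} [Fintype α] (u : α → ℝ) : Prop :=
  (∀ a, 0 ≤ u a) ∧ ∑ a, u a = 1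

/-- A garbling (stochastic map / behavioral strategy). -/
def IsKernel {α β : Type*} [Fintype β] (q : α → β → ℝ) : Prop :=
  ∀ a, IsDist (q a)

/-- Expected payoff in the zero-sum Bayesian game `Γ(u,g)` when players use
behavioral strategies `σ` and `τ`. -/
def pay {K C D I J : Type*} [Fintype K] [Fintype C] [Fintype D] [Fintype I] [Fintype J]
    (u : K × C × D → ℝ) (g : K → I → J → ℝ) (σ : C → I → ℝ) (τ : D → J → ℝ) : ℝ :=
  ∑ k, ∑ c, ∑ d, ∑ i, ∑ j, u (k, c, d) * σ c i * τ d j * g k i j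

/-- The value (maxmin) of the zero-sum Bayesian game `Γ(u,g)`, player 1 maximizing. -/
def gameVal {K C D I J : Type*} [Fintype K] [Fintype C] [Fintype D] [Fintype I] [Fintype J]
    (u : K × C × D → ℝ) (g : K → I → J → ℝ) : ℝ :=
  sSup {x : ℝ | ∃ σ : C → I → ℝ, IsKernel σ ∧
    x = sInf {y : ℝ | ∃ τ : D → J → ℝ, IsKernel τ ∧ y = pay u g σ τ}}

/-- Garbling of player 1's signal: `(q.u)(k,c,d) = ∑ c', u(k,c',d) q(c|c')`. -/
def garbleL {K C C' D : Type*} [Fintype C] (q : C → C' → ℝ) (u : K × C × D → ℝ) :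
    K × C' × D → ℝ :=
  fun x => ∑ c, u (x.1, c, x.2.2) * q c x.2.1

/-- Garbling of player 2's signal: `(u.q)(k,c,d) = ∑ d', u(k,c,d') q(d|d')`. -/
def garbleR {K C D D' : Type*} [Fintype D] (q : D → D' → ℝ) (u : K × C × D → ℝ) :
    K × C × D' → ℝ :=
  fun x => ∑ d, u (x.1, x.2.1, d) * q d x.2.2

/-- ℓ¹ distance. -/
def l1 {α : Type*} [Fintype α] (u v : α → ℝ) : ℝ := ∑ a, |u a - v a|

/-- Payoff functions bounded by 1. -/
def Bounded1 {K I J : Type*} (g : K → I → J → ℝ) : Prop := ∀ k i j, |g k i j| ≤ 1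

/-- The value-based distance: sup over all finite zero-sum games (with nonempty
finite action sets, payoffs bounded by 1) of the absolute difference of values. -/
def valueDist {K C D C' D' : Type*} [Fintype K] [Fintype C] [Fintype D] [Fintype C'] [Fintype D']
    (u : K × C × D → ℝ) (v : K × C' × D' → ℝ) : ℝ :=
  sSup {x : ℝ | ∃ (m n : ℕ) (g : K → Fin (m + 1) → Fin (n + 1) → ℝ),
    Bounded1 g ∧ x = |gameVal u g - gameVal v g|}

/-- Value of a single-agent decision problem on a single-agent information structure. -/
def val1 {K C I : Type*} [Fintype K] [Fintype C] [Fintype I] [Nonempty I]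
    (u : K × C → ℝ) (g : K → I → ℝ) : ℝ :=
  ∑ c, ⨆ i, ∑ k, u (k, c) * g k i

/-- The single-agent value-based distance. -/
def valueDist1 {K C C' : Type*} [Fintype K] [Fintype C] [Fintype C']
    (u : K × C → ℝ) (v : K × C' → ℝ) : ℝ :=
  sSup {x : ℝ | ∃ (m : ℕ) (g : K → Fin (m + 1) → ℝ),
    (∀ k i, |g k i| ≤ 1) ∧ x = |val1 u g - val1 v g|}

/-- Garbling of the signal in a single-agent structure. -/
def garble1 {K C C' : Type*} [Fintype C] (q : C → C' → ℝ) (u : K × C → ℝ) : K × C' → ℝ :=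
  fun x => ∑ c, u (x.1, c) * q c x.2

end

/-- The structure `u_n`: the state is binary, the 2(n+1) pairs of signals
`(i, i)` (state 0) and `(i, i+1)` (state 1), `i = 0,…,n`, are uniform. -/
noncomputable def uSeq (n : ℕ) : Fin 2 × Fin (n + 1) × Fin (n + 2) → ℝ := fun x =>
  if (x.1 = 0 ∧ (x.2.2 : ℕ) = (x.2.1 : ℕ)) ∨ (x.1 = 1 ∧ (x.2.2 : ℕ) = (x.2.1 : ℕ) + 1)
  then 1 / (2 * ((n : ℝ) + 1)) else 0

/-- The trivial structure: uniform binary state, no information. -/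
noncomputable def uTriv : Fin 2 × Fin 1 × Fin 1 → ℝ := fun _ => 1 / 2
section Helpers

open Finset

variable {K C D I J : Type*} [Fintype K] [Fintype C] [Fintype D] [Fintype I] [Fintype J]

lemma sum_ite_val {n : ℕ} (m : ℕ) (h : m < n) (a : ℝ) :
    ∑ d : Fin n, (if (d : ℕ) = m then a else 0) = a := by
  have he : ∀ d : Fin n, ((d : ℕ) = m) = (d = ⟨m, h⟩) := by
    intro d; simp [Fin.ext_iff]
  simp_rw [he]
  simp

lemma pay_eq (u : K × C × D → ℝ) (g : K → I → J → ℝ) (σ : C → I → ℝ) (τ : D → J → ℝ) :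
    pay u g σ τ = ∑ k, ∑ c, ∑ d, u (k, c, d) * ∑ i, ∑ j, σ c i * τ d j * g k i j := by
  unfold pay
  refine Finset.sum_congr rfl fun k _ => Finset.sum_congr rfl fun c _ =>
    Finset.sum_congr rfl fun d _ => ?_
  rw [Finset.mul_sum]
  refine Finset.sum_congr rfl fun i _ => ?_
  rw [Finset.mul_sum]
  refine Finset.sum_congr rfl fun j _ => ?_
  ring

lemma bilin_bound (p : I → ℝ) (q : J → ℝ) (G : I → J → ℝ)
    (hp : IsDist p) (hq : IsDist q) (hG : ∀ i j, |G i j| ≤ 1) :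
    |∑ i, ∑ j, p i * q j * G i j| ≤ 1 := by
  calc |∑ i, ∑ j, p i * q j * G i j| ≤ ∑ i, ∑ j, |p i * q j * G i j| := by
        refine (Finset.abs_sum_le_sum_abs _ _).trans ?_
        exact Finset.sum_le_sum fun i _ => Finset.abs_sum_le_sum_abs _ _
    _ ≤ ∑ i, ∑ j, p i * q j := by
        refine Finset.sum_le_sum fun i _ => Finset.sum_le_sum fun j _ => ?_
        rw [abs_mul, abs_mul, abs_of_nonneg (hp.1 i), abs_of_nonneg (hq.1 j)]
        calc p i * q j * |G i j| ≤ p i * q j * 1 := by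
              exact mul_le_mul_of_nonneg_left (hG i j) (mul_nonneg (hp.1 i) (hq.1 j))
          _ = p i * q j := by ring
    _ = 1 := by rw [← Finset.sum_mul_sum, hp.2, hq.2, one_mul]

lemma sum_u_eq (u : K × C × D → ℝ) (hu : IsDist u) :
    ∑ k, ∑ c, ∑ d, u (k, c, d) = 1 := by
  have := hu.2
  rw [Fintype.sum_prod_type] at this
  simp_rw [Fintype.sum_prod_type] at this
  exact this
  
lemma pay_bound (u : K × C × D → ℝ) (g : K → I → J → ℝ) (σ : C → I → ℝ) (τ : D → J → ℝ)
    (hu : IsDist u) (hg : Bounded1 g) (hσ : IsKernel σ) (hτ : IsKernel τ) :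
    |pay u g σ τ| ≤ 1 := by
  rw [pay_eq]
  calc |∑ k, ∑ c, ∑ d, u (k, c, d) * ∑ i, ∑ j, σ c i * τ d j * g k i j|
      ≤ ∑ k, ∑ c, ∑ d, |u (k, c, d) * ∑ i, ∑ j, σ c i * τ d j * g k i j| := by
        refine (Finset.abs_sum_le_sum_abs _ _).trans (Finset.sum_le_sum fun k _ => ?_)
        refine (Finset.abs_sum_le_sum_abs _ _).trans (Finset.sum_le_sum fun c _ => ?_)
        exact Finset.abs_sum_le_sum_abs _ _
    _ ≤ ∑ k, ∑ c, ∑ d, u (k, c, d) := by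
        refine Finset.sum_le_sum fun k _ => Finset.sum_le_sum fun c _ =>
          Finset.sum_le_sum fun d _ => ?_
        rw [abs_mul, abs_of_nonneg (hu.1 (k, c, d))]
        calc u (k, c, d) * |∑ i, ∑ j, σ c i * τ d j * g k i j| ≤ u (k, c, d) * 1 :=
              mul_le_mul_of_nonneg_left
                (bilin_bound _ _ _ (hσ c) (hτ d) (fun i j => hg k i j)) (hu.1 (k, c, d))
          _ = u (k, c, d) := by ring
    _ = 1 := sum_u_eq u hu

/-- uniform kernel -/
lemma unif_isKernel {α : Type*} (m : ℕ) :
    IsKernel (fun (_ : α) (_ : Fin (m + 1)) => (1 : ℝ) / (m + 1)) := by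
  intro a
  constructor
  · intro b; positivity
  · rw [Finset.sum_const, Finset.card_univ, Fintype.card_fin, nsmul_eq_mul, Nat.cast_add, Nat.cast_one]
    field_simp

end Helpers
section Structs

lemma uSeq_nonneg (n : ℕ) (x) : 0 ≤ uSeq n x := by
  unfold uSeq; split_ifs <;> positivity

lemma uSeq_sum_d (n : ℕ) (k : Fin 2) (c : Fin (n + 1)) :
    ∑ d : Fin (n + 2), uSeq n (k, c, d) = 1 / (2 * ((n : ℝ) + 1)) := by
  fin_cases k <;> simp only [Fin.mk_zero, Fin.mk_one]
  · have he : ∀ d : Fin (n + 2), uSeq n (0, c, d)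
        = if (d : ℕ) = (c : ℕ) then 1 / (2 * ((n : ℝ) + 1)) else 0 := by
      intro d; simp [uSeq]
    simp_rw [he]
    exact sum_ite_val (c : ℕ) (by omega) _
  · have he : ∀ d : Fin (n + 2), uSeq n (1, c, d)
        = if (d : ℕ) = (c : ℕ) + 1 then 1 / (2 * ((n : ℝ) + 1)) else 0 := by
      intro d; simp [uSeq]
    simp_rw [he]
    exact sum_ite_val ((c : ℕ) + 1) (by omega) _

lemma uSeq_isDist (n : ℕ) : IsDist (uSeq n) := by
  refine ⟨uSeq_nonneg n, ?_⟩
  rw [Fintype.sum_prod_type]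
  simp_rw [Fintype.sum_prod_type]
  simp_rw [uSeq_sum_d]
  simp only [Finset.sum_const, Finset.card_univ, Fintype.card_fin, nsmul_eq_mul]
  push_cast
  have : ((n : ℝ) + 1) ≠ 0 := by positivity
  field_simp

lemma uTriv_isDist : IsDist uTriv := by
  constructor
  · intro a; unfold uTriv; norm_num
  · unfold uTriv
    rw [Finset.sum_const, Finset.card_univ]
    simp

/-- marginal of player 2's signal given k = 0 -/
lemma uSeq_M0 (n : ℕ) (d : Fin (n + 2)) :
    ∑ c : Fin (n + 1), uSeq n (0, c, d)
      = if (d : ℕ) ≤ n then 1 / (2 * ((n : ℝ) + 1)) else 0 := by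
  have he : ∀ c : Fin (n + 1), uSeq n (0, c, d)
      = if (c : ℕ) = (d : ℕ) then 1 / (2 * ((n : ℝ) + 1)) else 0 := by
    intro c; simp [uSeq, eq_comm]
  simp_rw [he]
  by_cases h : (d : ℕ) ≤ n
  · rw [if_pos h]
    exact sum_ite_val (d : ℕ) (by omega) _
  · rw [if_neg h]
    refine Finset.sum_eq_zero fun c _ => ?_
    rw [if_neg (by omega)]

/-- marginal of player 2's signal given k = 1 -/
lemma uSeq_M1 (n : ℕ) (d : Fin (n + 2)) :
    ∑ c : Fin (n + 1), uSeq n (1, c, d)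
      = if 1 ≤ (d : ℕ) then 1 / (2 * ((n : ℝ) + 1)) else 0 := by
  have he : ∀ c : Fin (n + 1), uSeq n (1, c, d)
      = if (d : ℕ) = (c : ℕ) + 1 then 1 / (2 * ((n : ℝ) + 1)) else 0 := by
    intro c; simp [uSeq]
  simp_rw [he]
  by_cases h : 1 ≤ (d : ℕ)
  · rw [if_pos h]
    have he2 : ∀ c : Fin (n + 1), ((d : ℕ) = (c : ℕ) + 1) = ((c : ℕ) = (d : ℕ) - 1) := by
      intro c; simp only [eq_iff_iff]; omega
    simp_rw [he2]
    exact sum_ite_val ((d : ℕ) - 1) (by omega) _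
  · rw [if_neg h]
    refine Finset.sum_eq_zero fun c _ => ?_
    rw [if_neg (by omega)]

lemma uSeq_sum_P (n : ℕ) :
    ∑ d : Fin (n + 2), (∑ k : Fin 2, ∑ c : Fin (n + 1), uSeq n (k, c, d)) = 1 := by
  rw [Finset.sum_comm]
  have : ∀ k : Fin 2, ∑ d : Fin (n + 2), ∑ c : Fin (n + 1), uSeq n (k, c, d)
      = ∑ c : Fin (n + 1), ∑ d : Fin (n + 2), uSeq n (k, c, d) := fun k => Finset.sum_comm
  simp_rw [this, uSeq_sum_d]
  simp only [Finset.sum_const, Finset.card_univ, Fintype.card_fin, nsmul_eq_mul]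
  push_cast
  have : ((n : ℝ) + 1) ≠ 0 := by positivity
  field_simp

end Structs
section Bars

noncomputable def sigmaBar (n m : ℕ) (σ : Fin (n + 1) → Fin (m + 1) → ℝ) :
    Fin 1 → Fin (m + 1) → ℝ :=
  fun _ i => (∑ c, σ c i) / ((n : ℝ) + 1)

noncomputable def tauBar (n m' : ℕ) (τ : Fin (n + 2) → Fin (m' + 1) → ℝ) :
    Fin 1 → Fin (m' + 1) → ℝ :=
  fun _ j => ∑ d, (∑ k : Fin 2, ∑ c : Fin (n + 1), uSeq n (k, c, d)) * τ d j

lemma sigmaBar_isKernel (n m : ℕ) (σ : Fin (n + 1) → Fin (m + 1) → ℝ)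
    (hσ : IsKernel σ) : IsKernel (sigmaBar n m σ) := by
  intro a
  constructor
  · intro i
    unfold sigmaBar
    have h1 : (0 : ℝ) ≤ ∑ c, σ c i := Finset.sum_nonneg fun c _ => (hσ c).1 i
    positivity
  · unfold sigmaBar
    rw [← Finset.sum_div, Finset.sum_comm]
    simp_rw [fun c => (hσ c).2]
    simp only [Finset.sum_const, Finset.card_univ, Fintype.card_fin, nsmul_eq_mul, mul_one]
    push_cast
    have : ((n : ℝ) + 1) ≠ 0 := by positivity
    field_simp

lemma tauBar_isKernel (n m' : ℕ) (τ : Fin (n + 2) → Fin (m' + 1) → ℝ)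
    (hτ : IsKernel τ) : IsKernel (tauBar n m' τ) := by
  intro a
  constructor
  · intro j
    unfold tauBar
    refine Finset.sum_nonneg fun d _ => mul_nonneg ?_ ((hτ d).1 j)
    exact Finset.sum_nonneg fun k _ => Finset.sum_nonneg fun c _ => uSeq_nonneg n _
  · unfold tauBar
    rw [Finset.sum_comm]
    have : ∀ d : Fin (n + 2), ∑ j, (∑ k : Fin 2, ∑ c : Fin (n + 1), uSeq n (k, c, d)) * τ d j
        = ∑ k : Fin 2, ∑ c : Fin (n + 1), uSeq n (k, c, d) := by
      intro d
      rw [← Finset.mul_sum, (hτ d).2, mul_one]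
    simp_rw [this]
    exact uSeq_sum_P n

lemma const_isKernel {α β γ : Type*} [Fintype γ] (σ0 : α → γ → ℝ) (hσ0 : IsKernel σ0) (a : α) :
    IsKernel (fun (_ : β) => σ0 a) := fun _ => hσ0 a

end Bars
section PayCalc

lemma sum_rot {A B C M : Type*} [Fintype A] [Fintype B] [Fintype C] [AddCommMonoid M]
    (f : A → B → C → M) :
    ∑ i, ∑ j, ∑ d, f i j d = ∑ d, ∑ i, ∑ j, f i j d := by
  calc ∑ i, ∑ j, ∑ d, f i j d = ∑ i, ∑ d, ∑ j, f i j d :=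
        Finset.sum_congr rfl fun i _ => Finset.sum_comm
    _ = ∑ d, ∑ i, ∑ j, f i j d := Finset.sum_comm

lemma payR_triv {I J : Type*} [Fintype I] [Fintype J] (g : Fin 2 → I → J → ℝ)
    (σ0 : Fin 1 → I → ℝ) (τ0 : Fin 1 → J → ℝ) :
    pay uTriv g σ0 τ0 = ∑ k : Fin 2, ∑ i, ∑ j, 1 / 2 * σ0 0 i * τ0 0 j * g k i j := by
  simp only [pay, uTriv, Fin.sum_univ_one]

lemma payL_seq_const (n m m' : ℕ) (g : Fin 2 → Fin (m + 1) → Fin (m' + 1) → ℝ)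
    (σ : Fin (n + 1) → Fin (m + 1) → ℝ) (τ0 : Fin 1 → Fin (m' + 1) → ℝ) :
    pay (uSeq n) g σ (fun _ => τ0 0)
      = ∑ k : Fin 2, ∑ c : Fin (n + 1), ∑ i, ∑ j,
          1 / (2 * ((n : ℝ) + 1)) * σ c i * τ0 0 j * g k i j := by
  simp only [pay]
  refine Finset.sum_congr rfl fun k _ => Finset.sum_congr rfl fun c _ => ?_
  conv_lhs => rw [Finset.sum_comm]
  refine Finset.sum_congr rfl fun i _ => ?_
  conv_lhs => rw [Finset.sum_comm]
  refine Finset.sum_congr rfl fun j _ => ?_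
  rw [← Finset.sum_mul, ← Finset.sum_mul, ← Finset.sum_mul, uSeq_sum_d]

lemma claimB_eq (n m m' : ℕ) (g : Fin 2 → Fin (m + 1) → Fin (m' + 1) → ℝ)
    (σ : Fin (n + 1) → Fin (m + 1) → ℝ) (τ0 : Fin 1 → Fin (m' + 1) → ℝ) :
    pay (uSeq n) g σ (fun _ => τ0 0) = pay uTriv g (sigmaBar n m σ) τ0 := by
  rw [payL_seq_const, payR_triv]
  refine Finset.sum_congr rfl fun k _ => ?_
  conv_lhs => rw [Finset.sum_comm]
  refine Finset.sum_congr rfl fun i _ => ?_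
  conv_lhs => rw [Finset.sum_comm]
  refine Finset.sum_congr rfl fun j _ => ?_
  rw [← Finset.sum_mul, ← Finset.sum_mul, ← Finset.mul_sum]
  simp only [sigmaBar]
  have hN : ((n : ℝ) + 1) ≠ 0 := by positivity
  field_simp

lemma payL2 (n m m' : ℕ) (g : Fin 2 → Fin (m + 1) → Fin (m' + 1) → ℝ)
    (σ0 : Fin 1 → Fin (m + 1) → ℝ) (τ : Fin (n + 2) → Fin (m' + 1) → ℝ) :
    pay (uSeq n) g (fun _ => σ0 0) τ
      = ∑ k : Fin 2, ∑ d : Fin (n + 2), (∑ c : Fin (n + 1), uSeq n (k, c, d))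
          * ∑ i, ∑ j, σ0 0 i * τ d j * g k i j := by
  simp only [pay]
  refine Finset.sum_congr rfl fun k _ => ?_
  conv_lhs => rw [Finset.sum_comm]
  refine Finset.sum_congr rfl fun d _ => ?_
  rw [← sum_rot]
  simp only [Finset.mul_sum]
  refine Finset.sum_congr rfl fun i _ => Finset.sum_congr rfl fun j _ => ?_
  rw [← Finset.sum_mul, ← Finset.sum_mul, ← Finset.sum_mul]
  ring

lemma payR2 (n m m' : ℕ) (g : Fin 2 → Fin (m + 1) → Fin (m' + 1) → ℝ)
    (σ0 : Fin 1 → Fin (m + 1) → ℝ) (τ : Fin (n + 2) → Fin (m' + 1) → ℝ) :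
    pay uTriv g σ0 (tauBar n m' τ)
      = ∑ k : Fin 2, ∑ d : Fin (n + 2),
          ((∑ k' : Fin 2, ∑ c : Fin (n + 1), uSeq n (k', c, d)) / 2)
          * ∑ i, ∑ j, σ0 0 i * τ d j * g k i j := by
  rw [payR_triv]
  refine Finset.sum_congr rfl fun k _ => ?_
  simp only [tauBar, Finset.mul_sum, Finset.sum_mul]
  rw [sum_rot]
  refine Finset.sum_congr rfl fun d _ => Finset.sum_congr rfl fun i _ =>
    Finset.sum_congr rfl fun j _ => ?_
  have hpt2 : ∀ (x : Fin 2) (c : Fin (n + 1)),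
      1 / 2 * σ0 0 i * (uSeq n (x, c, d) * τ d j) * g k i j
        = uSeq n (x, c, d) * (1 / 2 * σ0 0 i * τ d j * g k i j) := fun _ _ => by ring
  simp_rw [hpt2, ← Finset.sum_mul]
  ring

lemma abs_sum_sum_le {A B' : Type*} [Fintype A] [Fintype B'] (x Bf : A → B' → ℝ)
    (hB : ∀ a b, |Bf a b| ≤ 1) : |∑ a, ∑ b, x a b * Bf a b| ≤ ∑ a, ∑ b, |x a b| := by
  refine (Finset.abs_sum_le_sum_abs _ _).trans (Finset.sum_le_sum fun a _ => ?_)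
  refine (Finset.abs_sum_le_sum_abs _ _).trans (Finset.sum_le_sum fun b _ => ?_)
  rw [abs_mul]
  calc |x a b| * |Bf a b| ≤ |x a b| * 1 := mul_le_mul_of_nonneg_left (hB a b) (abs_nonneg _)
    _ = |x a b| := mul_one _

lemma absM_sum (n : ℕ) :
    ∑ k : Fin 2, ∑ d : Fin (n + 2),
      |(∑ c : Fin (n + 1), uSeq n (k, c, d))
        - (∑ k' : Fin 2, ∑ c : Fin (n + 1), uSeq n (k', c, d)) / 2|
      = 1 / ((n : ℝ) + 1) := by
  rw [Fin.sum_univ_two, ← Finset.sum_add_distrib]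
  have hN : ((n : ℝ) + 1) ≠ 0 := by positivity
  have hpt : ∀ d : Fin (n + 2),
      |(∑ c : Fin (n + 1), uSeq n (0, c, d))
        - (∑ k' : Fin 2, ∑ c : Fin (n + 1), uSeq n (k', c, d)) / 2|
      + |(∑ c : Fin (n + 1), uSeq n (1, c, d))
        - (∑ k' : Fin 2, ∑ c : Fin (n + 1), uSeq n (k', c, d)) / 2|
      = (if (d : ℕ) = 0 then 1 / (2 * ((n : ℝ) + 1)) else 0)
        + (if (d : ℕ) = n + 1 then 1 / (2 * ((n : ℝ) + 1)) else 0) := by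
    intro d
    simp_rw [Fin.sum_univ_two]
    rw [uSeq_M0, uSeq_M1]
    have hd := d.isLt
    have ha : (0 : ℝ) ≤ 1 / (2 * ((n : ℝ) + 1)) := by positivity
    by_cases h0 : (d : ℕ) = 0
    · rw [if_pos (by omega : (d : ℕ) ≤ n), if_neg (by omega : ¬ 1 ≤ (d : ℕ)),
        if_pos h0, if_neg (by omega : ¬ (d : ℕ) = n + 1)]
      rw [show (1 / (2 * ((n : ℝ) + 1)) - (1 / (2 * ((n : ℝ) + 1)) + 0) / 2)
          = 1 / (2 * ((n : ℝ) + 1)) / 2 by ring,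
        show ((0 : ℝ) - (1 / (2 * ((n : ℝ) + 1)) + 0) / 2) = -(1 / (2 * ((n : ℝ) + 1)) / 2) by ring,
        abs_neg, abs_of_nonneg (by linarith)]
      ring
    · by_cases h1 : (d : ℕ) = n + 1
      · rw [if_neg (by omega : ¬ (d : ℕ) ≤ n), if_pos (by omega : 1 ≤ (d : ℕ)),
          if_neg h0, if_pos h1]
        rw [show ((0 : ℝ) - (0 + 1 / (2 * ((n : ℝ) + 1))) / 2) = -(1 / (2 * ((n : ℝ) + 1)) / 2) by ring,
          show (1 / (2 * ((n : ℝ) + 1)) - (0 + 1 / (2 * ((n : ℝ) + 1))) / 2)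
            = 1 / (2 * ((n : ℝ) + 1)) / 2 by ring,
          abs_neg, abs_of_nonneg (by linarith)]
        ring
      · rw [if_pos (by omega : (d : ℕ) ≤ n), if_pos (by omega : 1 ≤ (d : ℕ)),
          if_neg h0, if_neg h1]
        rw [show (1 / (2 * ((n : ℝ) + 1)) - (1 / (2 * ((n : ℝ) + 1)) + 1 / (2 * ((n : ℝ) + 1))) / 2)
          = 0 by ring, abs_zero]
  simp_rw [hpt]
  rw [Finset.sum_add_distrib, sum_ite_val 0 (by omega), sum_ite_val (n + 1) (by omega),
    ← add_div, div_eq_div_iff (by positivity) hN]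
  ring

lemma claimA_bound (n m m' : ℕ) (g : Fin 2 → Fin (m + 1) → Fin (m' + 1) → ℝ) (hg : Bounded1 g)
    (σ0 : Fin 1 → Fin (m + 1) → ℝ) (hσ0 : IsKernel σ0)
    (τ : Fin (n + 2) → Fin (m' + 1) → ℝ) (hτ : IsKernel τ) :
    |pay (uSeq n) g (fun _ => σ0 0) τ - pay uTriv g σ0 (tauBar n m' τ)| ≤ 1 / ((n : ℝ) + 1) := by
  rw [payL2, payR2, ← Finset.sum_sub_distrib]
  simp_rw [← Finset.sum_sub_distrib, ← sub_mul]
  refine (abs_sum_sum_le _ _ fun k d =>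
    bilin_bound (σ0 0) (τ d) (g k) (hσ0 0) (hτ d) (fun i j => hg k i j)).trans ?_
  exact le_of_eq (absM_sum n)

end PayCalc
section Main

open Filter

/-- inner (player-2 best response) set -/
def Tset {C D I J : Type*} [Fintype C] [Fintype D] [Fintype I] [Fintype J]
    (u : Fin 2 × C × D → ℝ) (g : Fin 2 → I → J → ℝ) (σ : C → I → ℝ) : Set ℝ :=
  {y | ∃ τ : D → J → ℝ, IsKernel τ ∧ y = pay u g σ τ}

/-- outer (player-1) set -/
def Sset {C D I J : Type*} [Fintype C] [Fintype D] [Fintype I] [Fintype J]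
    (u : Fin 2 × C × D → ℝ) (g : Fin 2 → I → J → ℝ) : Set ℝ :=
  {x | ∃ σ : C → I → ℝ, IsKernel σ ∧ x = sInf (Tset u g σ)}

lemma gameVal_eq {C D I J : Type*} [Fintype C] [Fintype D] [Fintype I] [Fintype J]
    (u : Fin 2 × C × D → ℝ) (g : Fin 2 → I → J → ℝ) :
    gameVal u g = sSup (Sset u g) := rfl

variable {C D : Type*} [Fintype C] [Fintype D] {m m' : ℕ}

lemma Tset_nonempty (u : Fin 2 × C × D → ℝ) (g : Fin 2 → Fin (m + 1) → Fin (m' + 1) → ℝ)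
    (σ : C → Fin (m + 1) → ℝ) : (Tset u g σ).Nonempty :=
  ⟨pay u g σ (fun _ _ => 1 / ((m' : ℝ) + 1)), fun _ _ => (1 : ℝ) / ((m' : ℝ) + 1),
    unif_isKernel m', rfl⟩

lemma Tset_bounds {u : Fin 2 × C × D → ℝ} {g : Fin 2 → Fin (m + 1) → Fin (m' + 1) → ℝ}
    {σ : C → Fin (m + 1) → ℝ} (hu : IsDist u) (hg : Bounded1 g) (hσ : IsKernel σ) :
    ∀ y ∈ Tset u g σ, -1 ≤ y ∧ y ≤ 1 := by
  rintro y ⟨τ, hτ, rfl⟩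
  have := pay_bound u g σ τ hu hg hσ hτ
  rw [abs_le] at this
  exact this

lemma Tset_bddBelow {u : Fin 2 × C × D → ℝ} {g : Fin 2 → Fin (m + 1) → Fin (m' + 1) → ℝ}
    {σ : C → Fin (m + 1) → ℝ} (hu : IsDist u) (hg : Bounded1 g) (hσ : IsKernel σ) :
    BddBelow (Tset u g σ) :=
  ⟨-1, fun y hy => (Tset_bounds hu hg hσ y hy).1⟩

lemma sInf_Tset_le_one {u : Fin 2 × C × D → ℝ} {g : Fin 2 → Fin (m + 1) → Fin (m' + 1) → ℝ}
    {σ : C → Fin (m + 1) → ℝ} (hu : IsDist u) (hg : Bounded1 g) (hσ : IsKernel σ) :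
    sInf (Tset u g σ) ≤ 1 := by
  obtain ⟨y, hy⟩ := Tset_nonempty u g σ
  exact (csInf_le (Tset_bddBelow hu hg hσ) hy).trans (Tset_bounds hu hg hσ y hy).2

lemma neg_one_le_sInf_Tset {u : Fin 2 × C × D → ℝ} {g : Fin 2 → Fin (m + 1) → Fin (m' + 1) → ℝ}
    {σ : C → Fin (m + 1) → ℝ} (hu : IsDist u) (hg : Bounded1 g) (hσ : IsKernel σ) :
    -1 ≤ sInf (Tset u g σ) :=
  le_csInf (Tset_nonempty u g σ) (fun y hy => (Tset_bounds hu hg hσ y hy).1)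

lemma Sset_nonempty (u : Fin 2 × C × D → ℝ) (g : Fin 2 → Fin (m + 1) → Fin (m' + 1) → ℝ) :
    (Sset u g).Nonempty :=
  ⟨sInf (Tset u g (fun _ _ => (1 : ℝ) / ((m : ℝ) + 1))),
    fun _ _ => (1 : ℝ) / ((m : ℝ) + 1), unif_isKernel m, rfl⟩

lemma Sset_bddAbove {u : Fin 2 × C × D → ℝ} {g : Fin 2 → Fin (m + 1) → Fin (m' + 1) → ℝ}
    (hu : IsDist u) (hg : Bounded1 g) : BddAbove (Sset u g) := by
  refine ⟨1, ?_⟩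
  rintro x ⟨σ, hσ, rfl⟩
  exact sInf_Tset_le_one hu hg hσ

lemma gameVal_le_one {u : Fin 2 × C × D → ℝ} {g : Fin 2 → Fin (m + 1) → Fin (m' + 1) → ℝ}
    (hu : IsDist u) (hg : Bounded1 g) : gameVal u g ≤ 1 := by
  rw [gameVal_eq]
  refine csSup_le (Sset_nonempty u g) ?_
  rintro x ⟨σ, hσ, rfl⟩
  exact sInf_Tset_le_one hu hg hσ

lemma neg_one_le_gameVal {u : Fin 2 × C × D → ℝ} {g : Fin 2 → Fin (m + 1) → Fin (m' + 1) → ℝ}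
    (hu : IsDist u) (hg : Bounded1 g) : -1 ≤ gameVal u g := by
  rw [gameVal_eq]
  obtain ⟨x, hx⟩ := Sset_nonempty u g
  refine le_trans ?_ (le_csSup (Sset_bddAbove hu hg) hx)
  obtain ⟨σ, hσ, rfl⟩ := hx
  exact neg_one_le_sInf_Tset hu hg hσ

/-- the per-game value comparison -/
lemma val_diff (n m m' : ℕ) (g : Fin 2 → Fin (m + 1) → Fin (m' + 1) → ℝ) (hg : Bounded1 g) :
    |gameVal (uSeq n) g - gameVal uTriv g| ≤ 1 / ((n : ℝ) + 1) := by
  have hN : (0 : ℝ) < (n : ℝ) + 1 := by positivity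
  have hN' : (0 : ℝ) < 1 / ((n : ℝ) + 1) := by positivity
  have huS := uSeq_isDist n
  have huT := uTriv_isDist
  rw [abs_sub_le_iff]
  constructor
  · -- gameVal (uSeq n) g ≤ gameVal uTriv g (claim B)
    have hB : gameVal (uSeq n) g ≤ gameVal uTriv g := by
      rw [gameVal_eq, gameVal_eq]
      refine csSup_le (Sset_nonempty _ _) ?_
      rintro x ⟨σ, hσ, rfl⟩
      have h1 : sInf (Tset (uSeq n) g σ) ≤ sInf (Tset uTriv g (sigmaBar n m σ)) := by
        refine le_csInf (Tset_nonempty _ _ _) ?_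
        rintro y ⟨τ0, hτ0, rfl⟩
        refine csInf_le (Tset_bddBelow huS hg hσ) ?_
        exact ⟨fun _ => τ0 0, const_isKernel τ0 hτ0 0, (claimB_eq n m m' g σ τ0).symm⟩
      refine h1.trans (le_csSup (Sset_bddAbove huT hg) ?_)
      exact ⟨sigmaBar n m σ, sigmaBar_isKernel n m σ hσ, rfl⟩
    linarith
  · -- gameVal uTriv g ≤ gameVal (uSeq n) g + 1/(n+1) (claim A)
    rw [sub_le_iff_le_add]
    rw [gameVal_eq uTriv g]
    refine csSup_le (Sset_nonempty _ _) ?_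
    rintro x ⟨σ0, hσ0, rfl⟩
    have h1 : sInf (Tset uTriv g σ0) - 1 / ((n : ℝ) + 1)
        ≤ sInf (Tset (uSeq n) g (fun _ => σ0 0)) := by
      refine le_csInf (Tset_nonempty _ _ _) ?_
      rintro y ⟨τ, hτ, rfl⟩
      have h2 : sInf (Tset uTriv g σ0) ≤ pay uTriv g σ0 (tauBar n m' τ) :=
        csInf_le (Tset_bddBelow huT hg hσ0)
          ⟨tauBar n m' τ, tauBar_isKernel n m' τ hτ, rfl⟩
      have h3 := claimA_bound n m m' g hg σ0 hσ0 τ hτ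
      rw [abs_le] at h3
      linarith [h3.1]
    have h4 : sInf (Tset (uSeq n) g (fun _ => σ0 0)) ≤ gameVal (uSeq n) g := by
      rw [gameVal_eq]
      exact le_csSup (Sset_bddAbove huS hg)
        ⟨fun _ => σ0 0, const_isKernel σ0 hσ0 0, rfl⟩
    linarith

lemma valueDist_le (n : ℕ) : valueDist (uSeq n) uTriv ≤ 2 / ((n : ℝ) + 1) := by
  have hN : (0 : ℝ) < (n : ℝ) + 1 := by positivity
  refine Real.sSup_le ?_ (by positivity)
  rintro x ⟨m, m', g, hg, rfl⟩
  refine (val_diff n m m' g hg).trans ?_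
  rw [div_le_div_iff₀ hN hN]
  nlinarith

lemma valueDist_nonneg (n : ℕ) : 0 ≤ valueDist (uSeq n) uTriv := by
  have hbdd : BddAbove {x : ℝ | ∃ (m m' : ℕ) (g : Fin 2 → Fin (m + 1) → Fin (m' + 1) → ℝ),
      Bounded1 g ∧ x = |gameVal (uSeq n) g - gameVal uTriv g|} := by
    refine ⟨2, ?_⟩
    rintro x ⟨m, m', g, hg, rfl⟩
    have h1 := gameVal_le_one (uSeq_isDist n) hg
    have h2 := neg_one_le_gameVal (uSeq_isDist n) hg
    have h3 := gameVal_le_one uTriv_isDist hg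
    have h4 := neg_one_le_gameVal uTriv_isDist hg
    rw [abs_le]
    constructor <;> linarith
  have hmem : |gameVal (uSeq n) (fun _ _ _ => (0 : ℝ)) - gameVal uTriv (fun _ _ _ => (0 : ℝ))|
      ∈ {x : ℝ | ∃ (m m' : ℕ) (g : Fin 2 → Fin (m + 1) → Fin (m' + 1) → ℝ),
        Bounded1 g ∧ x = |gameVal (uSeq n) g - gameVal uTriv g|} :=
    ⟨0, 0, fun _ _ _ => 0, fun _ _ _ => by norm_num, rfl⟩
  exact le_trans (abs_nonneg _) (le_csSup hbdd hmem)

end Main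
theorem stmt18 :
    (∀ n : ℕ, valueDist (uSeq n) uTriv ≤ 2 / ((n : ℝ) + 1)) ∧
      Filter.Tendsto (fun n : ℕ => valueDist (uSeq n) uTriv) Filter.atTop (nhds 0) := by
  refine ⟨valueDist_le, ?_⟩
  have hb : Filter.Tendsto (fun n : ℕ => 2 / ((n : ℝ) + 1)) Filter.atTop (nhds 0) := by
    have h1 : Filter.Tendsto (fun n : ℕ => 1 / ((n : ℝ) + 1)) Filter.atTop (nhds 0) :=
      tendsto_one_div_add_atTop_nhds_zero_nat
    have h2 := h1.const_mul (2 : ℝ)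
    simpa [div_eq_mul_inv] using h2
  exact squeeze_zero valueDist_nonneg valueDist_le hb
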